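/- The product of a strictly totally positive n×n matrix and a nonsingular totally positive n×n matrix is strictly totally positive. -/

import Mathlib

open Finset Matrix

/-- Step 1 of Cauchy–Binet: expand the determinant of a product by multilinearity in rows. -/
theorem cb_expand {k n : ℕ} (M : Matrix (Fin k) (Fin n) ℝ) (N : Matrix (Fin n) (Fin k) ℝ) :
    (M * N).det = ∑ f : Fin k → Fin n, (∏ i, M i (f i)) * (N.submatrix f id).det := by
  have hrow : (M * N) = Matrix.of fun i => ∑ l, M i l • N l := by
    ext i j
    simp [Matrix.mul_apply, Finset.sum_apply]
  rw [hrow]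
  have : Matrix.det (Matrix.of fun i => ∑ l, M i l • N l)
      = Matrix.detRowAlternating (fun i => ∑ l, M i l • N l) := rfl
  rw [this]
  have hms := Matrix.detRowAlternating.toMultilinearMap.map_sum
    (g := fun (i : Fin k) (l : Fin n) => M i l • N l)
  simp only [AlternatingMap.coe_multilinearMap] at hms
  rw [hms]
  refine Finset.sum_congr rfl fun f _ => ?_
  have := Matrix.detRowAlternating.toMultilinearMap.map_smul_univ
    (fun i => M i (f i)) (fun i => N (f i))
  simp [smul_eq_mul] at this; exact this

/-- Cauchy–Binet formula. -/
theorem cauchyBinet {k n : ℕ} (M : Matrix (Fin k) (Fin n) ℝ) (N : Matrix (Fin n) (Fin k) ℝ) :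
    (M * N).det = ∑ f ∈ Finset.univ.filter (fun f : Fin k → Fin n => StrictMono f),
      (M.submatrix id f).det * (N.submatrix f id).det := by
  rw [cb_expand]
  rw [← Finset.sum_filter_add_sum_filter_not Finset.univ (fun f : Fin k → Fin n =>
    Function.Injective f)]
  have h2 : ∑ f ∈ Finset.univ.filter (fun f : Fin k → Fin n => ¬ Function.Injective f),
      (∏ i, M i (f i)) * (N.submatrix f id).det = 0 := by
    refine Finset.sum_eq_zero fun f hf => ?_
    simp only [Finset.mem_filter] at hf
    obtain ⟨a, b, hab, hne⟩ := Function.not_injective_iff.mp hf.2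
    have : (N.submatrix f id).det = 0 :=
      Matrix.det_zero_of_row_eq hne (by funext j; simp [Matrix.submatrix_apply, hab])
    rw [this, mul_zero]
  rw [h2, add_zero]
  -- Reindex injective maps as (strictly monotone map) ∘ (permutation)
  have h3 : ∑ f ∈ Finset.univ.filter (fun f : Fin k → Fin n => Function.Injective f),
      (∏ i, M i (f i)) * (N.submatrix f id).det
      = ∑ p ∈ (Finset.univ.filter (fun f : Fin k → Fin n => StrictMono f)) ×ˢ
          (Finset.univ : Finset (Equiv.Perm (Fin k))),
        (∏ i, M i (p.1 (p.2 i))) * (N.submatrix (p.1 ∘ p.2) id).det := by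
    refine Finset.sum_nbij' (fun f => (f ∘ Tuple.sort f, (Tuple.sort f)⁻¹))
      (fun p => p.1 ∘ p.2) ?_ ?_ ?_ ?_ ?_
    · intro f hf
      simp only [Finset.mem_filter, Finset.mem_univ, true_and] at hf
      simp only [Finset.mem_product, Finset.mem_filter, Finset.mem_univ, true_and, and_true]
      exact (Tuple.monotone_sort f).strictMono_of_injective
        (hf.comp (Tuple.sort f).injective)
    · intro p hp
      simp only [Finset.mem_product, Finset.mem_filter, Finset.mem_univ, true_and, and_true] at hp
      simp only [Finset.mem_filter, Finset.mem_univ, true_and]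
      exact hp.injective.comp p.2.injective
    · intro f hf
      funext x
      simp
    · intro p hp
      simp only [Finset.mem_product, Finset.mem_filter, Finset.mem_univ, true_and, and_true] at hp
      have hinj : Function.Injective (p.1 ∘ p.2) := hp.injective.comp p.2.injective
      have hmono : Monotone ((p.1 ∘ ⇑p.2) ∘ ⇑p.2⁻¹) := by
        have : (p.1 ∘ ⇑p.2) ∘ ⇑p.2⁻¹ = p.1 := by funext x; simp
        rw [this]; exact hp.monotone
      have hsort : (p.1 ∘ ⇑p.2) ∘ ⇑p.2⁻¹ = (p.1 ∘ ⇑p.2) ∘ ⇑(Tuple.sort (p.1 ∘ ⇑p.2)) :=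
        (Tuple.comp_sort_eq_comp_iff_monotone).mpr hmono
      have hperm : (p.2)⁻¹ = Tuple.sort (p.1 ∘ ⇑p.2) :=
        Equiv.ext fun x => hinj (congrFun hsort x)
      have hfst : (p.1 ∘ ⇑p.2) ∘ ⇑(Tuple.sort (p.1 ∘ ⇑p.2)) = p.1 := by
        rw [← hsort]; funext x; simp
      exact Prod.ext hfst (by show (Tuple.sort (p.1 ∘ ⇑p.2))⁻¹ = p.2; rw [← hperm, inv_inv])
    · intro f hf
      have hcomp : (f ∘ ⇑(Tuple.sort f)) ∘ ⇑(Tuple.sort f)⁻¹ = f := by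
        funext x; simp
      have hptw : ∀ i, (f ∘ ⇑(Tuple.sort f)) ((Tuple.sort f)⁻¹ i) = f i := fun i => by simp
      simp only [hcomp, hptw]
  rw [h3, Finset.sum_product]
  refine Finset.sum_congr rfl fun g hg => ?_
  simp only [Finset.mem_filter, Finset.mem_univ, true_and] at hg
  -- inner sum over permutations gives det (M.submatrix id g) * det (N.submatrix g id)
  have key : ∀ σ : Equiv.Perm (Fin k),
      (∏ i, M i (g (σ i))) * (N.submatrix (g ∘ σ) id).det
      = ((Equiv.Perm.sign σ : ℝ) * ∏ i, (M.submatrix id g)ᵀ (σ i) i)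
        * (N.submatrix g id).det := by
    intro σ
    have h1 : N.submatrix (g ∘ σ) id = (N.submatrix g id).submatrix σ id := by
      simp [Matrix.submatrix_submatrix, Function.comp]
    rw [h1, Matrix.det_permute]
    have h2 : ∀ i, (M.submatrix id g)ᵀ (σ i) i = M i (g (σ i)) := fun i => rfl
    simp only [h2]
    ring
  simp only [key]
  rw [← Finset.sum_mul]
  congr 1
  rw [← Matrix.det_transpose (M.submatrix id g), Matrix.det_apply']

theorem STP_mul_nonsingular_TP (n : ℕ) (A B : Matrix (Fin n) (Fin n) ℝ)
    (hA : ∀ (k : ℕ) (r c : Fin k → Fin n), StrictMono r → StrictMono c →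
        0 < (A.submatrix r c).det)
    (hB : ∀ (k : ℕ) (r c : Fin k → Fin n), StrictMono r → StrictMono c →
        0 ≤ (B.submatrix r c).det)
    (hBns : B.det ≠ 0) :
    ∀ (k : ℕ) (r c : Fin k → Fin n), StrictMono r → StrictMono c →
      0 < ((A * B).submatrix r c).det := by
  intro k r c hr hc
  rw [Matrix.submatrix_mul A B r id c Function.bijective_id, cauchyBinet]
  -- there is a strictly monotone s with det (B.submatrix s c) ≠ 0
  have hexists : ∃ s ∈ Finset.univ.filter (fun s : Fin k → Fin n => StrictMono s),
      (B.submatrix s c).det ≠ 0 := by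
    by_contra hcon
    push_neg at hcon
    have hinv : B⁻¹ * B = 1 := Matrix.nonsing_inv_mul B (isUnit_iff_ne_zero.mpr hBns)
    have h1 : ((B⁻¹ * B).submatrix c c).det = 1 := by
      rw [hinv, Matrix.submatrix_one c hc.injective, Matrix.det_one]
    rw [Matrix.submatrix_mul B⁻¹ B c id c Function.bijective_id, cauchyBinet] at h1
    have : ∑ s ∈ Finset.univ.filter (fun s : Fin k → Fin n => StrictMono s),
        ((B⁻¹.submatrix c id).submatrix id s).det * ((B.submatrix id c).submatrix s id).det
        = 0 := by
      refine Finset.sum_eq_zero fun s hs => ?_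
      have : ((B.submatrix id c).submatrix s id) = B.submatrix s c := by
        simp [Matrix.submatrix_submatrix]
      rw [this, hcon s hs, mul_zero]
    rw [this] at h1
    exact one_ne_zero h1.symm
  obtain ⟨s, hs, hsne⟩ := hexists
  have hsmono : StrictMono s := by
    simpa using (Finset.mem_filter.mp hs).2
  refine Finset.sum_pos' ?_ ⟨s, hs, ?_⟩
  · intro t ht
    have htmono : StrictMono t := by simpa using (Finset.mem_filter.mp ht).2
    have hA' : 0 < (((A.submatrix r id)).submatrix id t).det := by
      have : ((A.submatrix r id)).submatrix id t = A.submatrix r t := by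
        simp [Matrix.submatrix_submatrix]
      rw [this]; exact hA k r t hr htmono
    have hB' : 0 ≤ ((B.submatrix id c).submatrix t id).det := by
      have : (B.submatrix id c).submatrix t id = B.submatrix t c := by
        simp [Matrix.submatrix_submatrix]
      rw [this]; exact hB k t c htmono hc
    exact mul_nonneg hA'.le hB'
  · have hA' : 0 < (((A.submatrix r id)).submatrix id s).det := by
      have : ((A.submatrix r id)).submatrix id s = A.submatrix r s := by
        simp [Matrix.submatrix_submatrix]
      rw [this]; exact hA k r s hr hsmono
    have hB' : 0 < ((B.submatrix id c).submatrix s id).det := by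
      have heq : (B.submatrix id c).submatrix s id = B.submatrix s c := by
        simp [Matrix.submatrix_submatrix]
      rw [heq]
      exact lt_of_le_of_ne (hB k s c hsmono hc) (Ne.symm hsne)
    exact mul_pos hA' hB'
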